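/- arXiv:1004.3802 — 9 statements merged into one kernel-verified Lean document; each statement's English description precedes it below -/
import Mathlib

section
/- Let (X, ≺) be a well-founded extensional graph and let x, y be nodes of X. If the pointed graphs X/x and X/y are isomorphic (as pointed graphs), then x = y. -/
universe u v

/-- A relation is (inductively) well-founded if every inductive subset is the whole type:
`S` is inductive when `x ∈ S` whenever every child of `x` is in `S`. -/
def IsWFRel {X : Type u} (r : X → X → Prop) : Prop :=
  ∀ S : Set X, (∀ x, (∀ y, r y x → y ∈ S) → x ∈ S) → S = Set.univ

/-- A relation is extensional if nodes with the same children are equal. -/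
def IsExtRel {X : Type u} (r : X → X → Prop) : Prop :=
  ∀ x y, (∀ z, r z x ↔ r z y) → x = y

/-- `Below r x` is the full subgraph `X/x` of nodes admitting a (possibly empty) path to `x`. -/
def Below {X : Type u} (r : X → X → Prop) (x : X) : Type u :=
  {z : X // Relation.ReflTransGen r z x}

/-- The induced relation on the subgraph `X/x`. -/
def belowRel {X : Type u} (r : X → X → Prop) (x : X) :
    Below r x → Below r x → Prop :=
  fun a b => r a.1 b.1

/-- The root of the pointed subgraph `X/x`. -/
def belowRoot {X : Type u} (r : X → X → Prop) (x : X) : Below r x :=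
  ⟨x, Relation.ReflTransGen.refl⟩

/-- Isomorphism of pointed graphs: a relation-preserving-and-reflecting bijection
taking the first distinguished point to the second. -/
def PIso {X : Type u} {Y : Type v} (rX : X → X → Prop) (rY : Y → Y → Prop)
    (x : X) (y : Y) : Prop :=
  ∃ f : X ≃ Y, (∀ a b, rX a b ↔ rY (f a) (f b)) ∧ f x = y

/-- A simulation of graphs. -/
def IsSimulation {X : Type u} {Y : Type v} (rX : X → X → Prop)
    (rY : Y → Y → Prop) (f : X → Y) : Prop :=
  (∀ a b, rX a b → rY (f a) (f b)) ∧
  (∀ x y, rY y (f x) → ∃ a, rX a x ∧ f a = y)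

/-- A bisimulation between graphs. -/
def IsBisimulation {X : Type u} {Y : Type v} (rX : X → X → Prop)
    (rY : Y → Y → Prop) (R : X → Y → Prop) : Prop :=
  ∀ x y, R x y →
    (∀ x', rX x' x → ∃ y', rY y' y ∧ R x' y') ∧
    (∀ y', rY y' y → ∃ x', rX x' x ∧ R x' y')

/-- A bi-entire relation. -/
def BiEntire {X : Type u} {Y : Type v} (R : X → Y → Prop) : Prop :=
  (∀ x, ∃ y, R x y) ∧ (∀ y, ∃ x, R x y)


lemma lift_below {X : Type u} {r : X → X → Prop} {x a b : X}
    (hab : Relation.ReflTransGen r a b) :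
    ∀ (hb : Relation.ReflTransGen r b x),
      Relation.ReflTransGen (belowRel r x) ⟨a, hab.trans hb⟩ ⟨b, hb⟩ := by
  induction hab with
  | refl => intro hb; exact .refl
  | tail h1 h2 ih =>
      intro hb
      exact (ih (Relation.ReflTransGen.head h2 hb)).tail h2

lemma restrict_piso {X : Type u} {r : X → X → Prop} {x y : X}
    (f : Below r x ≃ Below r y)
    (hf : ∀ a b, belowRel r x a b ↔ belowRel r y (f a) (f b))
    (u : Below r x) :
    PIso (belowRel r u.1) (belowRel r (f u).1) (belowRoot r u.1) (belowRoot r (f u).1) := by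
  have hf' : ∀ a b, belowRel r y a b ↔ belowRel r x (f.symm a) (f.symm b) := by
    intro a b
    conv_lhs => rw [← f.apply_symm_apply a, ← f.apply_symm_apply b]
    exact (hf _ _).symm
  have proj : ∀ {Z : Type u} {s : Z → Z → Prop} {w : Z} (p q : Below s w),
      Relation.ReflTransGen (belowRel s w) p q → Relation.ReflTransGen s p.1 q.1 :=
    fun p q h => h.lift Subtype.val (fun _ _ hpq => hpq)
  have hfr : ∀ a b : Below r x, Relation.ReflTransGen (belowRel r x) a b →
      Relation.ReflTransGen (belowRel r y) (f a) (f b) :=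
    fun a b h => h.lift f (fun p q hpq => (hf p q).1 hpq)
  have hfr' : ∀ a b : Below r y, Relation.ReflTransGen (belowRel r y) a b →
      Relation.ReflTransGen (belowRel r x) (f.symm a) (f.symm b) :=
    fun a b h => h.lift f.symm (fun p q hpq => (hf' p q).1 hpq)
  refine ⟨⟨fun a => ⟨(f ⟨a.1, a.2.trans u.2⟩).1, proj _ _ (hfr _ u (lift_below a.2 u.2))⟩,
          fun b => ⟨(f.symm ⟨b.1, b.2.trans (f u).2⟩).1,
            proj _ _ (by simpa using hfr' _ (f u) (lift_below b.2 (f u).2))⟩,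
          ?_, ?_⟩, ?_, ?_⟩
  · intro a
    apply Subtype.ext
    show (f.symm (f ⟨a.1, a.2.trans u.2⟩)).1 = a.1
    exact congrArg Subtype.val (f.symm_apply_apply _)
  · intro b
    apply Subtype.ext
    show (f (f.symm ⟨b.1, b.2.trans (f u).2⟩)).1 = b.1
    exact congrArg Subtype.val (f.apply_symm_apply _)
  · intro a b
    exact hf ⟨a.1, a.2.trans u.2⟩ ⟨b.1, b.2.trans u.2⟩
  · apply Subtype.ext
    show (f ⟨u.1, Relation.ReflTransGen.refl.trans u.2⟩).1 = (f u).1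
    rfl

lemma piso_symm {X : Type u} {Y : Type v} {rX : X → X → Prop} {rY : Y → Y → Prop}
    {x : X} {y : Y} (h : PIso rX rY x y) : PIso rY rX y x := by
  obtain ⟨f, hf, hx⟩ := h
  refine ⟨f.symm, fun a b => ?_, by rw [← hx]; simp⟩
  conv_lhs => rw [← f.apply_symm_apply a, ← f.apply_symm_apply b]
  exact (hf _ _).symm

/-- If `(X, r)` is a well-founded extensional graph and the pointed subgraphs `X/x` and `X/y`
are isomorphic as pointed graphs, then `x = y`. -/
theorem subgraph_pointed_iso_eq {X : Type u} (r : X → X → Prop)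
    (hwf : IsWFRel r) (hext : IsExtRel r) (x y : X)
    (h : PIso (belowRel r x) (belowRel r y) (belowRoot r x) (belowRoot r y)) :
    x = y := by
  have hwfW : WellFounded r := by
    constructor
    intro a
    have h1 : {x | Acc r x} = Set.univ := hwf {x | Acc r x} (fun x h => ⟨x, h⟩)
    have : a ∈ {x | Acc r x} := h1 ▸ Set.mem_univ a
    exact this
  suffices H : ∀ x y : X,
      PIso (belowRel r x) (belowRel r y) (belowRoot r x) (belowRoot r y) → x = y from
    H x y h
  clear h x y
  intro x
  induction x using hwfW.induction with
  | _ x IH =>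
    intro y h
    obtain ⟨f, hf, hroot⟩ := h
    apply hext
    intro z
    constructor
    · intro hz
      have hu : Relation.ReflTransGen r z x := Relation.ReflTransGen.single hz
      set u : Below r x := ⟨z, hu⟩ with hudef
      have h1 : r (f u).1 y := by
        have := (hf u (belowRoot r x)).1 hz
        rwa [hroot] at this
      have h2 := restrict_piso f hf u
      have := IH z hz (f u).1 h2
      rw [this]; exact h1
    · intro hz
      have hf' : ∀ a b, belowRel r y a b ↔ belowRel r x (f.symm a) (f.symm b) := by
        intro a b
        conv_lhs => rw [← f.apply_symm_apply a, ← f.apply_symm_apply b]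
        exact (hf _ _).symm
      have hv : Relation.ReflTransGen r z y := Relation.ReflTransGen.single hz
      set v : Below r y := ⟨z, hv⟩ with hvdef
      have hroot' : f.symm (belowRoot r y) = belowRoot r x := by rw [← hroot]; simp
      have h1 : r (f.symm v).1 x := by
        have := (hf' v (belowRoot r y)).1 hz
        rwa [hroot'] at this
      have h2 := restrict_piso f.symm hf' v
      have := IH (f.symm v).1 h1 z (piso_symm h2)
      rw [← this]; exact h1
end

section
/- Any bi-entire bisimulation R between well-founded extensional graphs (X, ≺) and (Y, ≺) is the graph of an isomorphism: there is a bijection f : X → Y such that R(x,y) holds if and only if f x = y, and x' ≺ x if and only if f x' ≺ f x. -/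
universe u v

theorem wf_of_isWFRel {X : Type u} {r : X → X → Prop} (h : IsWFRel r) : WellFounded r := by
  constructor
  intro a
  have h2 := h {x | Acc r x} (fun x hx => Acc.intro x hx)
  have : a ∈ ({x | Acc r x} : Set X) := h2 ▸ Set.mem_univ a
  exact this

/-- A bi-entire bisimulation between well-founded extensional graphs is the graph of an
isomorphism. -/
theorem bientire_bisimulation_iso {X : Type u} {Y : Type u}
    (rX : X → X → Prop) (rY : Y → Y → Prop) (R : X → Y → Prop)
    (hwfX : IsWFRel rX) (hextX : IsExtRel rX)
    (hwfY : IsWFRel rY) (hextY : IsExtRel rY)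
    (hbis : IsBisimulation rX rY R) (hent : BiEntire R) :
    ∃ f : X ≃ Y, (∀ x y, R x y ↔ f x = y) ∧ (∀ a b, rX a b ↔ rY (f a) (f b)) := by

  have wfX := wf_of_isWFRel hwfX
  have wfY := wf_of_isWFRel hwfY
  have sv : ∀ x, ∀ y y', R x y → R x y' → y = y' := by
    intro x
    induction x using WellFounded.induction wfX with
    | _ x ih =>
      intro y y' hy hy'
      apply hextY
      intro z
      constructor
      · intro hz
        obtain ⟨x', hx', hR⟩ := (hbis x y hy).2 z hz
        obtain ⟨z', hz', hR'⟩ := (hbis x y' hy').1 x' hx'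
        rwa [ih x' hx' z z' hR hR']
      · intro hz
        obtain ⟨x', hx', hR⟩ := (hbis x y' hy').2 z hz
        obtain ⟨z', hz', hR'⟩ := (hbis x y hy).1 x' hx'
        rwa [← ih x' hx' z' z hR' hR]
  have inj : ∀ y, ∀ x x', R x y → R x' y → x = x' := by
    intro y
    induction y using WellFounded.induction wfY with
    | _ y ih =>
      intro x x' hx hx'
      apply hextX
      intro z
      constructor
      · intro hz
        obtain ⟨y', hy', hR⟩ := (hbis x y hx).1 z hz
        obtain ⟨z', hz', hR'⟩ := (hbis x' y hx').2 y' hy'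
        rwa [ih y' hy' z z' hR hR']
      · intro hz
        obtain ⟨y', hy', hR⟩ := (hbis x' y hx').1 z hz
        obtain ⟨z', hz', hR'⟩ := (hbis x y hx).2 y' hy'
        rwa [← ih y' hy' z' z hR' hR]
  choose f hf using hent.1
  choose g hg using hent.2
  have gf : ∀ x, g (f x) = x := fun x => inj (f x) _ _ (hg (f x)) (hf x)
  have fg : ∀ y, f (g y) = y := fun y => sv (g y) _ _ (hf (g y)) (hg y)
  refine ⟨⟨f, g, gf, fg⟩, ?_, ?_⟩
  · intro x y
    constructor
    · intro h; exact sv x _ _ (hf x) h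
    · rintro rfl; exact hf x
  · intro a b
    constructor
    · intro h
      obtain ⟨y', hy', hR⟩ := (hbis b (f b) (hf b)).1 a h
      show rY (f a) (f b)
      rwa [sv a _ _ hR (hf a)] at hy'
    · intro h
      obtain ⟨x', hx', hR⟩ := (hbis b (f b) (hf b)).2 (f a) h
      rwa [inj (f a) x' a hR (hf a)] at hx'
end

section
/- A well-founded graph (X, ≺) is extensional if and only if every bisimulation R from X to itself is contained in the identity, i.e., R(x,y) implies x = y. -/
universe u v

/-- A well-founded graph is extensional iff every bisimulation from it to itself is
contained in the identity. -/
theorem wf_ext_iff_bisimulations_sub_id {X : Type u} (r : X → X → Prop)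
    (hwf : IsWFRel r) :
    IsExtRel r ↔
      ∀ R : X → X → Prop, IsBisimulation r r R → ∀ x y, R x y → x = y := by
  constructor
  · intro hext R hR
    have key : {x | ∀ y, R x y → x = y} = Set.univ := by
      apply hwf
      intro x ih y hxy
      obtain ⟨h1, h2⟩ := hR x y hxy
      apply hext
      intro z
      constructor
      · intro hz
        obtain ⟨y', hy', hRy'⟩ := h1 z hz
        rwa [ih z hz y' hRy'] 
      · intro hz
        obtain ⟨x', hx', hRx'⟩ := h2 z hz
        rwa [← ih x' hx' z hRx']
    intro x y hxy
    exact (key ▸ Set.mem_univ x : x ∈ {x | ∀ y, R x y → x = y}) y hxy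
  · intro h x y hxy
    apply h (fun a b => ∀ z, r z a ↔ r z b) _ x y hxy
    intro a b hab
    constructor
    · intro x' hx'
      exact ⟨x', (hab x').mp hx', fun z => Iff.rfl⟩
    · intro y' hy'
      exact ⟨y', (hab y').mpr hy', fun z => Iff.rfl⟩
end

section
/- Let (X, ≺) be a graph and R an equivalence relation on X which is also a bisimulation from X to X. Let q : X → X/R be the quotient map, and define a relation ≺' on X/R by a ≺' b iff there exist x ≺ y in X with q x = a and q y = b. Then q is a simulation from (X, ≺) to (X/R, ≺'). Moreover, if (X, ≺, ⋆) is an accessible pointed graph, then (X/R, ≺', q ⋆) is an accessible pointed graph. -/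
universe u v

/-- Quotient of a graph by an equivalence-relation bisimulation: the quotient map is a
simulation onto the induced relation, and accessible pointed graphs quotient to
accessible pointed graphs. -/
theorem bisimulation_quotient {X : Type u} (r R : X → X → Prop)
    (hR : Equivalence R) (hbis : IsBisimulation r r R) :
    IsSimulation r
      (fun a b => ∃ x y, r x y ∧ Quot.mk R x = a ∧ Quot.mk R y = b)
      (Quot.mk R) ∧
    ∀ star : X, (∀ x, Relation.ReflTransGen r x star) →
      ∀ a : Quot R,
        Relation.ReflTransGen
          (fun a b => ∃ x y, r x y ∧ Quot.mk R x = a ∧ Quot.mk R y = b)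
          a (Quot.mk R star) := by
  constructor
  · constructor
    · intro a b hab
      exact ⟨a, b, hab, rfl, rfl⟩
    · rintro x y ⟨u, v, huv, rfl, hv⟩
      have hRvx : R v x := by
        rw [Quot.eq] at hv
        exact (Equivalence.eqvGen_iff hR).mp hv
      obtain ⟨u', hu', hRuu'⟩ := (hbis v x hRvx).1 u huv
      exact ⟨u', hu', Quot.sound (hR.symm hRuu')⟩
  · intro star hacc a
    induction a using Quot.ind with
    | _ x =>
      have h := hacc x
      clear hacc
      induction h with
      | refl => exact Relation.ReflTransGen.refl
      | @tail b c _ hr ih =>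
        exact Relation.ReflTransGen.tail ih ⟨b, c, hr, rfl, rfl⟩
end

section
/- Extensionality holds for well-founded extensional apgs: two well-founded extensional apgs X and Y (on types in a fixed universe) are isomorphic as pointed graphs if and only if for every well-founded extensional apg Z (on a type in the same universe), Z ⋿ X ↔ Z ⋿ Y. -/
universe u v

/-- A well-founded extensional accessible pointed graph ("apg") on a type in universe `u`. -/
structure WEApg : Type (u + 1) where
  carrier : Type u
  rel : carrier → carrier → Prop
  root : carrier
  acc : ∀ x, Relation.ReflTransGen rel x root
  wf : IsWFRel rel
  ext : IsExtRel rel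

/-- Isomorphism of (the underlying pointed graphs of) apgs. -/
def WEApg.Iso (X Y : WEApg.{u}) : Prop :=
  PIso X.rel Y.rel X.root Y.root

/-- Membership of the pointed graph `(W, rW, w)` in the pointed graph `(Y, rY, y)`:
`(W, rW, w)` is isomorphic as a pointed graph to `(Y, rY)/z` for some child `z` of `y`. -/
def MemPGAt {W : Type u} {Y : Type v} (rW : W → W → Prop) (w : W)
    (rY : Y → Y → Prop) (y : Y) : Prop :=
  ∃ z, rY z y ∧ PIso rW (belowRel rY z) w (belowRoot rY z)

/-- `X ⋿ Y` for apgs: `X` is isomorphic as a pointed graph to `Y/y` for some member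
(child of the root) `y` of `Y`. -/
def WEApg.Mem (X Y : WEApg.{u}) : Prop :=
  MemPGAt X.rel X.root Y.rel Y.root

section Lemmas

variable {X : Type u} {Y : Type v} {Z : Type*}

theorem PIso.rfl {r : X → X → Prop} {x : X} : PIso r r x x :=
  ⟨Equiv.refl X, fun _ _ => Iff.rfl, Eq.refl x⟩

theorem PIso.symm {rX : X → X → Prop} {rY : Y → Y → Prop} {x y} :
    PIso rX rY x y → PIso rY rX y x := by
  rintro ⟨f, hf, hx⟩
  refine ⟨f.symm, fun a b => ?_, by simp [← hx]⟩
  have := hf (f.symm a) (f.symm b)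
  simpa using this.symm

theorem PIso.trans {rX : X → X → Prop} {rY : Y → Y → Prop} {rZ : Z → Z → Prop}
    {x y z} : PIso rX rY x y → PIso rY rZ y z → PIso rX rZ x z := by
  rintro ⟨f, hf, hx⟩ ⟨g, hg, hy⟩
  exact ⟨f.trans g, fun a b => (hf a b).trans (hg (f a) (f b)), by simp [hx, hy]⟩

theorem wellFounded_of_isWFRel {r : X → X → Prop} (h : IsWFRel r) : WellFounded r := by
  have hu : {x | Acc r x} = Set.univ := h _ (fun x hx => Acc.intro x hx)
  exact ⟨fun a => Set.eq_univ_iff_forall.mp hu a⟩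

theorem isWFRel_of_wellFounded {r : X → X → Prop} (h : WellFounded r) : IsWFRel r := by
  intro S hS
  exact Set.eq_univ_of_forall fun x => h.induction x fun a ih => hS a ih

end Lemmas

section Lemmas2

variable {X : Type u} {Y : Type v}

theorem rtg_lift {rX : X → X → Prop} {rY : Y → Y → Prop} (f : X → Y)
    (h : ∀ a b, rX a b → rY (f a) (f b)) {a b : X}
    (hab : Relation.ReflTransGen rX a b) :
    Relation.ReflTransGen rY (f a) (f b) :=
  hab.lift f h

/-- Lift a path within `Below r x` from the subtype structure. -/
theorem rtg_below_lift {r : X → X → Prop} {x : X} {b : Below r x} :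
    ∀ (z : X) (hzx : Relation.ReflTransGen r z x),
      Relation.ReflTransGen r z b.1 → Relation.ReflTransGen (belowRel r x) ⟨z, hzx⟩ b := by
  intro z hzx hzb
  revert hzx
  induction hzb using Relation.ReflTransGen.head_induction_on with
  | refl => intro hzx; exact Relation.ReflTransGen.refl
  | head hstep hrest ih =>
      intro hzx
      exact Relation.ReflTransGen.head (by exact hstep) (ih (hrest.trans b.2))
/-- L2: a global graph iso restricts to a pointed iso of below-subgraphs. -/
theorem belowCongr {rX : X → X → Prop} {rY : Y → Y → Prop} (f : X ≃ Y)
    (hf : ∀ a b, rX a b ↔ rY (f a) (f b)) (a : X) :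
    PIso (belowRel rX a) (belowRel rY (f a)) (belowRoot rX a) (belowRoot rY (f a)) := by
  have hf' : ∀ c d, rY c d → rX (f.symm c) (f.symm d) := by
    intro c d h
    rw [hf (f.symm c) (f.symm d)]
    simpa using h
  refine ⟨⟨fun z => ⟨f z.1, rtg_lift f (fun a b h => (hf a b).mp h) z.2⟩,
          fun w => ⟨f.symm w.1, by simpa using rtg_lift f.symm hf' w.2⟩,
          fun z => Subtype.ext (by simp), fun w => Subtype.ext (by simp)⟩,
        fun z w => hf z.1 w.1, Subtype.ext rfl⟩

/-- L5: the below-graph of an element of a below-graph. -/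
theorem belowBelow {rY : Y → Y → Prop} {y : Y} (b : Below rY y) :
    PIso (belowRel (belowRel rY y) b) (belowRel rY b.1)
      (belowRoot (belowRel rY y) b) (belowRoot rY b.1) := by
  refine ⟨⟨fun z => ⟨z.1.1, rtg_lift Subtype.val (fun _ _ h => h) z.2⟩,
          fun w => ⟨⟨w.1, w.2.trans b.2⟩, rtg_below_lift w.1 (w.2.trans b.2) w.2⟩,
          fun z => Subtype.ext (Subtype.ext rfl), fun w => Subtype.ext rfl⟩,
        fun z w => Iff.rfl, Subtype.ext rfl⟩

/-- The canonical candidate bisimulation. -/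
def BRel (rX : X → X → Prop) (rY : Y → Y → Prop) (x : X) (y : Y) : Prop :=
  PIso (belowRel rX x) (belowRel rY y) (belowRoot rX x) (belowRoot rY y)

theorem BRel.symm {rX : X → X → Prop} {rY : Y → Y → Prop} {x y} :
    BRel rX rY x y → BRel rY rX y x := PIso.symm

theorem BRel.down {rX : X → X → Prop} {rY : Y → Y → Prop} {x y}
    (h : BRel rX rY x y) {x'} (hx' : rX x' x) :
    ∃ y', rY y' y ∧ BRel rX rY x' y' := by
  obtain ⟨f, hf, hroot⟩ := h
  set a : Below rX x := ⟨x', Relation.ReflTransGen.single hx'⟩ with ha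
  refine ⟨(f a).1, ?_, ?_⟩
  · have := (hf a (belowRoot rX x)).mp hx'
    rwa [hroot] at this
  · exact ((belowBelow a).symm.trans (belowCongr f hf a)).trans (belowBelow (f a))

theorem BRel.up {rX : X → X → Prop} {rY : Y → Y → Prop} {x y}
    (h : BRel rX rY x y) {y'} (hy' : rY y' y) :
    ∃ x', rX x' x ∧ BRel rX rY x' y' := by
  obtain ⟨x', hx', hr⟩ := h.symm.down hy'
  exact ⟨x', hx', hr.symm⟩

/-- Functionality of `BRel`. -/
theorem BRel.func {rX : X → X → Prop} {rY : Y → Y → Prop}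
    (wfX : WellFounded rX) (extY : IsExtRel rY) :
    ∀ x (y y' : Y), BRel rX rY x y → BRel rX rY x y' → y = y' := by
  intro x
  induction x using WellFounded.induction wfX with
  | _ x ih =>
    intro y y' h h'
    refine extY y y' fun w => ⟨fun hw => ?_, fun hw => ?_⟩
    · obtain ⟨x', hx', hr⟩ := h.up hw
      obtain ⟨w', hw', hr'⟩ := h'.down hx'
      rw [ih x' hx' w w' hr hr']; exact hw'
    · obtain ⟨x', hx', hr⟩ := h'.up hw
      obtain ⟨w', hw', hr'⟩ := h.down hx'
      rw [ih x' hx' w w' hr hr']; exact hw'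
theorem BRel.inj {rX : X → X → Prop} {rY : Y → Y → Prop}
    (wfY : WellFounded rY) (extX : IsExtRel rX) {a a' : X} {b : Y}
    (h : BRel rX rY a b) (h' : BRel rX rY a' b) : a = a' :=
  BRel.func wfY extX b a a' h.symm h'.symm

theorem noCycle {r : X → X → Prop} (wf : WellFounded r) {a a' : X}
    (h : r a a') (h' : Relation.ReflTransGen r a' a) : False :=
  (wf.transGen).asymmetric _ _ (Relation.TransGen.head' h h') (Relation.TransGen.head' h h')

section Glue

variable {rX : X → X → Prop} {rY : Y → Y → Prop} {x : X} {y : Y}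

/-- The gluing relation. -/
def GRel (rX : X → X → Prop) (rY : Y → Y → Prop) (x : X) (y : Y) (a : X) (b : Y) : Prop :=
  (a = x ∧ b = y) ∨ BRel rX rY a b

theorem GRel.rootY (wfX : WellFounded rX) (extY : IsExtRel rY)
    (hx : ∀ x', rX x' x → ∃ y', rY y' y ∧ BRel rX rY x' y')
    (hy : ∀ y', rY y' y → ∃ x', rX x' x ∧ BRel rX rY x' y')
    {b' : Y} (hb' : BRel rX rY x b') : b' = y := by
  refine extY b' y fun w => ⟨fun hw => ?_, fun hw => ?_⟩
  · obtain ⟨x', hx', hr⟩ := hb'.up hw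
    obtain ⟨w', hw', hr'⟩ := hx x' hx'
    rw [BRel.func wfX extY x' w w' hr hr']; exact hw'
  · obtain ⟨x', hx', hr⟩ := hy w hw
    obtain ⟨w'', hw'', hr''⟩ := hb'.down hx'
    rw [BRel.func wfX extY x' w w'' hr hr'']; exact hw''

theorem GRel.rootX (wfY : WellFounded rY) (extX : IsExtRel rX)
    (hx : ∀ x', rX x' x → ∃ y', rY y' y ∧ BRel rX rY x' y')
    (hy : ∀ y', rY y' y → ∃ x', rX x' x ∧ BRel rX rY x' y')
    {a' : X} (ha' : BRel rX rY a' y) : a' = x := by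
  refine extX a' x fun v => ⟨fun hv => ?_, fun hv => ?_⟩
  · obtain ⟨w, hw, hr⟩ := ha'.down hv
    obtain ⟨x', hx', hr'⟩ := hy w hw
    rw [BRel.inj wfY extX hr hr']; exact hx'
  · obtain ⟨w, hw, hr⟩ := hx v hv
    obtain ⟨v', hv', hr'⟩ := ha'.up hw
    rw [BRel.inj wfY extX hr hr']; exact hv'

variable (wfX : WellFounded rX) (wfY : WellFounded rY)
  (extX : IsExtRel rX) (extY : IsExtRel rY)
  (hx : ∀ x', rX x' x → ∃ y', rY y' y ∧ BRel rX rY x' y')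
  (hy : ∀ y', rY y' y → ∃ x', rX x' x ∧ BRel rX rY x' y')

set_option linter.unusedSectionVars false

include wfX wfY extX extY hx hy

theorem GRel.func {a b b'} (h : GRel rX rY x y a b) (h' : GRel rX rY x y a b') : b = b' := by
  rcases h with ⟨rfl, rfl⟩ | hab
  · rcases h' with ⟨-, rfl⟩ | hab'
    · rfl
    · exact (GRel.rootY wfX extY hx hy hab').symm
  · rcases h' with ⟨rfl, rfl⟩ | hab'
    · exact GRel.rootY wfX extY hx hy hab
    · exact BRel.func wfX extY a b b' hab hab'

theorem GRel.injf {a a' b} (h : GRel rX rY x y a b) (h' : GRel rX rY x y a' b) : a = a' := by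
  rcases h with ⟨rfl, rfl⟩ | hab
  · rcases h' with ⟨rfl, -⟩ | hab'
    · rfl
    · exact (GRel.rootX wfY extX hx hy hab').symm
  · rcases h' with ⟨rfl, rfl⟩ | hab'
    · exact GRel.rootX wfY extX hx hy hab
    · exact BRel.inj wfY extX hab hab'

theorem GRel.ord {a a' b b'} (ha' : Relation.ReflTransGen rX a' x)
    (h : GRel rX rY x y a b) (h' : GRel rX rY x y a' b') (haa' : rX a a') : rY b b' := by
  rcases h with ⟨rfl, rfl⟩ | hab
  · exact absurd ha' (fun hp => noCycle wfX haa' hp)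
  · rcases h' with ⟨rfl, rfl⟩ | hab'
    · obtain ⟨w, hw, hr⟩ := hx a haa'
      rw [BRel.func wfX extY a b w hab hr]; exact hw
    · obtain ⟨b'', hb'', hr⟩ := hab'.down haa'
      rw [BRel.func wfX extY a b b'' hab hr]; exact hb''

theorem GRel.ord' {a a' b b'} (hb' : Relation.ReflTransGen rY b' y)
    (h : GRel rX rY x y a b) (h' : GRel rX rY x y a' b') (hbb' : rY b b') : rX a a' := by
  rcases h with ⟨rfl, rfl⟩ | hab
  · exact absurd hb' (fun hp => noCycle wfY hbb' hp)
  · rcases h' with ⟨rfl, rfl⟩ | hab'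
    · obtain ⟨v, hv, hr⟩ := hy b hbb'
      rw [BRel.inj wfY extX hab hr]; exact hv
    · obtain ⟨a'', ha'', hr⟩ := hab'.up hbb'
      rw [BRel.inj wfY extX hab hr]; exact ha''

theorem GRel.exF : ∀ a : X, Relation.ReflTransGen rX a x →
    ∃ b, Relation.ReflTransGen rY b y ∧ GRel rX rY x y a b := by
  intro a ha
  induction ha using Relation.ReflTransGen.head_induction_on with
  | refl => exact ⟨y, Relation.ReflTransGen.refl, Or.inl ⟨rfl, rfl⟩⟩
  | head hstep hrest ih =>
    obtain ⟨b, hb, tb⟩ := ih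
    rcases tb with ⟨rfl, rfl⟩ | hcb
    · obtain ⟨w, hw, hr⟩ := hx _ hstep
      exact ⟨w, Relation.ReflTransGen.single hw, Or.inr hr⟩
    · obtain ⟨b', hb', hr⟩ := hcb.down hstep
      exact ⟨b', Relation.ReflTransGen.head hb' hb, Or.inr hr⟩

theorem GRel.exG : ∀ b : Y, Relation.ReflTransGen rY b y →
    ∃ a, Relation.ReflTransGen rX a x ∧ GRel rX rY x y a b := by
  intro b hb
  induction hb using Relation.ReflTransGen.head_induction_on with
  | refl => exact ⟨x, Relation.ReflTransGen.refl, Or.inl ⟨rfl, rfl⟩⟩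
  | head hstep hrest ih =>
    obtain ⟨a, ha, ta⟩ := ih
    rcases ta with ⟨rfl, rfl⟩ | hca
    · obtain ⟨v, hv, hr⟩ := hy _ hstep
      exact ⟨v, Relation.ReflTransGen.single hv, Or.inr hr⟩
    · obtain ⟨a', ha', hr⟩ := hca.up hstep
      exact ⟨a', Relation.ReflTransGen.head ha' ha, Or.inr hr⟩

theorem BRel.glue : BRel rX rY x y := by
  classical
  set F : Below rX x → Below rY y :=
    fun a => ⟨(GRel.exF wfX wfY extX extY hx hy a.1 a.2).choose, (GRel.exF wfX wfY extX extY hx hy a.1 a.2).choose_spec.1⟩ with hFdef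
  have hF : ∀ a, GRel rX rY x y a.1 (F a).1 := fun a => (GRel.exF wfX wfY extX extY hx hy a.1 a.2).choose_spec.2
  set G : Below rY y → Below rX x :=
    fun b => ⟨(GRel.exG wfX wfY extX extY hx hy b.1 b.2).choose, (GRel.exG wfX wfY extX extY hx hy b.1 b.2).choose_spec.1⟩ with hGdef
  have hG : ∀ b, GRel rX rY x y (G b).1 b.1 := fun b => (GRel.exG wfX wfY extX extY hx hy b.1 b.2).choose_spec.2
  exact ⟨⟨F, G,
      fun a => Subtype.ext (GRel.injf wfX wfY extX extY hx hy (hG (F a)) (hF a)),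
      fun b => Subtype.ext (GRel.func wfX wfY extX extY hx hy (hF (G b)) (hG b))⟩,
    fun a a' => ⟨fun h => GRel.ord wfX wfY extX extY hx hy a'.2 (hF a) (hF a') h,
      fun h => GRel.ord' wfX wfY extX extY hx hy (F a').2 (hF a) (hF a') h⟩,
    Subtype.ext (GRel.func wfX wfY extX extY hx hy (hF (belowRoot rX x)) (Or.inl ⟨rfl, rfl⟩))⟩

end Glue

end Lemmas2

section Main

theorem rtg_below {X : Type u} (r : X → X → Prop) (x : X) (a : Below r x) :
    Relation.ReflTransGen (belowRel r x) a (belowRoot r x) :=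
  rtg_below_lift a.1 a.2 a.2

/-- The apg `X/x` of a well-founded extensional apg. -/
def belowApg (Xa : WEApg.{u}) (x : Xa.carrier) : WEApg.{u} where
  carrier := Below Xa.rel x
  rel := belowRel Xa.rel x
  root := belowRoot Xa.rel x
  acc := fun a => rtg_below _ _ a
  wf := isWFRel_of_wellFounded (InvImage.wf Subtype.val (wellFounded_of_isWFRel Xa.wf))
  ext := by
    intro a b h
    refine Subtype.ext (Xa.ext a.1 b.1 fun w => ⟨fun hw => ?_, fun hw => ?_⟩)
    · exact (h ⟨w, Relation.ReflTransGen.head hw a.2⟩).mp hw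
    · exact (h ⟨w, Relation.ReflTransGen.head hw b.2⟩).mpr hw

theorem pIso_below_root (Xa : WEApg.{u}) :
    PIso Xa.rel (belowRel Xa.rel Xa.root) Xa.root (belowRoot Xa.rel Xa.root) :=
  ⟨⟨fun z => ⟨z, Xa.acc z⟩, Subtype.val, fun _ => rfl, fun _ => Subtype.ext rfl⟩,
   fun _ _ => Iff.rfl, Subtype.ext rfl⟩

theorem mem_congr {Xa Ya Za : WEApg.{u}} (h : Xa.Iso Ya) (hm : Za.Mem Xa) : Za.Mem Ya := by
  obtain ⟨f, hf, hroot⟩ := h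
  obtain ⟨w, hw, hp⟩ := hm
  refine ⟨f w, ?_, hp.trans (belowCongr f hf w)⟩
  have := (hf w Xa.root).mp hw
  rwa [hroot] at this

theorem weapg_extensionality' (X Y : WEApg.{u}) :
    X.Iso Y ↔ ∀ Z : WEApg.{u}, (Z.Mem X ↔ Z.Mem Y) := by
  constructor
  · intro h Z
    exact ⟨mem_congr h, mem_congr (PIso.symm h)⟩
  · intro H
    have wfX := wellFounded_of_isWFRel X.wf
    have wfY := wellFounded_of_isWFRel Y.wf
    have hx : ∀ x', X.rel x' X.root → ∃ y', Y.rel y' Y.root ∧ BRel X.rel Y.rel x' y' := by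
      intro x' hx'
      have hm : (belowApg X x').Mem X := ⟨x', hx', PIso.rfl⟩
      obtain ⟨y', hy', hp⟩ := (H _).mp hm
      exact ⟨y', hy', hp⟩
    have hy : ∀ y', Y.rel y' Y.root → ∃ x', X.rel x' X.root ∧ BRel X.rel Y.rel x' y' := by
      intro y' hy'
      have hm : (belowApg Y y').Mem Y := ⟨y', hy', PIso.rfl⟩
      obtain ⟨x', hx', hp⟩ := (H _).mpr hm
      exact ⟨x', hx', hp.symm⟩
    have h : BRel X.rel Y.rel X.root Y.root := BRel.glue wfX wfY X.ext Y.ext hx hy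
    exact (pIso_below_root X).trans (h.trans (pIso_below_root Y).symm)

end Main

/-- Extensionality for well-founded extensional apgs: `X` and `Y` are isomorphic as
pointed graphs iff they have the same members. -/
theorem weapg_extensionality (X Y : WEApg.{u}) :
    X.Iso Y ↔ ∀ Z : WEApg.{u}, (Z.Mem X ↔ Z.Mem Y) := (weapg_extensionality' X Y)
end

section
/- Pairing holds for well-founded extensional apgs: for any two well-founded extensional apgs X and Y (on types in a fixed universe) there exists a well-founded extensional apg Z (on a type in the same universe) such that for every well-founded extensional apg W, W ⋿ Z if and only if W is isomorphic as a pointed graph to X or to Y. -/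
universe u v

section PairingAux

open Relation

theorem isWFRel_iff_wellFounded {X : Type u} (r : X → X → Prop) :
    IsWFRel r ↔ WellFounded r := by
  constructor
  · intro h
    constructor
    intro x
    have hS := h {x | Acc r x} (fun x hx => Acc.intro x hx)
    have : x ∈ ({x | Acc r x} : Set X) := hS ▸ Set.mem_univ x
    exact this
  · intro wf S hS
    apply Set.eq_univ_of_forall
    intro x
    induction x using wf.induction with
    | _ x IH => exact hS x IH

/-- The Mostowski collapse of a well-founded graph into `ZFSet`. -/
noncomputable def clps {X : Type u} (r : X → X → Prop) (wf : WellFounded r) : X → ZFSet.{u} :=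
  wf.fix (fun x IH => ZFSet.range.{u, u} (fun p : {x' // r x' x} => IH p.1 p.2))

theorem mem_clps {X : Type u} {r : X → X → Prop} (wf : WellFounded r) (x : X) (s : ZFSet.{u}) :
    s ∈ clps r wf x ↔ ∃ x', r x' x ∧ clps r wf x' = s := by
  rw [clps, wf.fix_eq, ZFSet.mem_range]
  constructor
  · rintro ⟨⟨x', hx'⟩, h⟩; exact ⟨x', hx', h⟩
  · rintro ⟨x', hx', h⟩; exact ⟨⟨x', hx'⟩, h⟩

/-- The collapse is invariant under child-closed embeddings. -/
theorem clps_comp {X A : Type u} {rX : X → X → Prop} {rA : A → A → Prop}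
    (wfX : WellFounded rX) (wfA : WellFounded rA) (f : X → A)
    (h1 : ∀ x' x, rX x' x → rA (f x') (f x))
    (h2 : ∀ x a, rA a (f x) → ∃ x', rX x' x ∧ f x' = a) (x : X) :
    clps rA wfA (f x) = clps rX wfX x := by
  induction x using wfX.induction with
  | _ x IH =>
    apply ZFSet.ext
    intro s
    rw [mem_clps, mem_clps]
    constructor
    · rintro ⟨a, ha, rfl⟩
      obtain ⟨x', hx', rfl⟩ := h2 x a ha
      exact ⟨x', hx', (IH x' hx').symm⟩
    · rintro ⟨x', hx', rfl⟩
      exact ⟨f x', h1 x' x hx', IH x' hx'⟩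

theorem clps_inj {X : Type u} {r : X → X → Prop} (wf : WellFounded r) (ext : IsExtRel r) :
    Function.Injective (clps r wf) := by
  intro a
  induction a using wf.induction with
  | _ x IH =>
    intro y h
    apply ext
    intro z
    constructor
    · intro hz
      have hm : clps r wf z ∈ clps r wf y := h ▸ (mem_clps wf x _).2 ⟨z, hz, rfl⟩
      obtain ⟨z', hz', hez⟩ := (mem_clps wf y _).1 hm
      rwa [IH z hz hez.symm]
    · intro hz
      have hm : clps r wf z ∈ clps r wf x := h.symm ▸ (mem_clps wf y _).2 ⟨z, hz, rfl⟩
      obtain ⟨z', hz', hez⟩ := (mem_clps wf x _).1 hm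
      rwa [← IH z' hz' hez]

/-- Two well-founded extensional accessible pointed graphs are isomorphic iff the
collapses of their roots agree. -/
theorem piso_iff_clps {X Y : Type u} {rX : X → X → Prop} {rY : Y → Y → Prop}
    {x : X} {y : Y}
    (wfX : WellFounded rX) (wfY : WellFounded rY)
    (extX : IsExtRel rX) (extY : IsExtRel rY)
    (accX : ∀ a, ReflTransGen rX a x) (accY : ∀ b, ReflTransGen rY b y) :
    PIso rX rY x y ↔ clps rX wfX x = clps rY wfY y := by
  constructor
  · rintro ⟨f, hf, hroot⟩
    have key : ∀ a, clps rY wfY (f a) = clps rX wfX a := by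
      intro a
      induction a using wfX.induction with
      | _ a IH =>
        apply ZFSet.ext
        intro s
        rw [mem_clps, mem_clps]
        constructor
        · rintro ⟨b, hb, rfl⟩
          refine ⟨f.symm b, ?_, ?_⟩
          · have := (hf (f.symm b) a).2
            simp only [Equiv.apply_symm_apply] at this
            exact this hb
          · rw [← IH (f.symm b) (by
              have := (hf (f.symm b) a).2
              simp only [Equiv.apply_symm_apply] at this
              exact this hb)]
            simp
        · rintro ⟨a', ha', rfl⟩
          exact ⟨f a', (hf a' a).1 ha', IH a' ha'⟩
    rw [← hroot, key]
  · intro h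
    have totX : ∀ a : X, ∃ b : Y, clps rY wfY b = clps rX wfX a := by
      intro a
      induction accX a using Relation.ReflTransGen.head_induction_on with
      | refl => exact ⟨y, h.symm⟩
      | @head a' c h' hp ih =>
        obtain ⟨b, hb⟩ := ih
        have hm : clps rX wfX a' ∈ clps rY wfY b := by
          rw [hb]
          exact (mem_clps wfX c _).2 ⟨a', h', rfl⟩
        obtain ⟨b', _, hb'⟩ := (mem_clps wfY b _).1 hm
        exact ⟨b', hb'⟩
    have totY : ∀ b : Y, ∃ a : X, clps rX wfX a = clps rY wfY b := by
      intro b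
      induction accY b using Relation.ReflTransGen.head_induction_on with
      | refl => exact ⟨x, h⟩
      | @head b' c h' hp ih =>
        obtain ⟨a, ha⟩ := ih
        have hm : clps rY wfY b' ∈ clps rX wfX a := by
          rw [ha]
          exact (mem_clps wfY c _).2 ⟨b', h', rfl⟩
        obtain ⟨a', _, ha'⟩ := (mem_clps wfX a _).1 hm
        exact ⟨a', ha'⟩
    choose F hF using totX
    choose G hG using totY
    have li : Function.LeftInverse G F := fun a =>
      clps_inj wfX extX (by rw [hG, hF])
    have ri : Function.RightInverse G F := fun b =>
      clps_inj wfY extY (by rw [hF, hG])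
    refine ⟨⟨F, G, li, ri⟩, ?_, ?_⟩
    · intro a b
      simp only [Equiv.coe_fn_mk]
      constructor
      · intro hab
        have hm : clps rY wfY (F a) ∈ clps rY wfY (F b) := by
          rw [hF, hF]
          exact (mem_clps wfX b _).2 ⟨a, hab, rfl⟩
        obtain ⟨b', hb', he⟩ := (mem_clps wfY (F b) _).1 hm
        have : b' = F a := clps_inj wfY extY he
        rwa [← this]
      · intro hab
        have hm : clps rX wfX a ∈ clps rX wfX b := by
          rw [← hF, ← hF]
          exact (mem_clps wfY (F b) _).2 ⟨F a, hab, rfl⟩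
        obtain ⟨a', ha', he⟩ := (mem_clps wfX b _).1 hm
        have : a' = a := clps_inj wfX extX he
        rwa [← this]
    · simp only [Equiv.coe_fn_mk]
      exact clps_inj wfY extY (by rw [hF, h])

/-! ### Facts about the subgraph `X/x` -/

theorem below_wf {Z : Type u} {r : Z → Z → Prop} (wf : WellFounded r) (z : Z) :
    WellFounded (belowRel r z) :=
  InvImage.wf Subtype.val wf

theorem below_closed {Z : Type u} {r : Z → Z → Prop} {z : Z} (a : Below r z) {w : Z}
    (hw : r w a.1) : ReflTransGen r w z :=
  ReflTransGen.head hw a.2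

theorem below_ext {Z : Type u} {r : Z → Z → Prop} (ext : IsExtRel r) (z : Z) :
    IsExtRel (belowRel r z) := by
  intro a b h
  apply Subtype.ext
  apply ext
  intro w
  constructor
  · intro hw
    exact (h ⟨w, below_closed a hw⟩).1 hw
  · intro hw
    exact (h ⟨w, below_closed b hw⟩).2 hw

theorem below_acc {Z : Type u} {r : Z → Z → Prop} (z : Z) (a : Below r z) :
    ReflTransGen (belowRel r z) a (belowRoot r z) := by
  obtain ⟨a, ha⟩ := a
  induction ha using Relation.ReflTransGen.head_induction_on with
  | refl => exact ReflTransGen.refl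
  | @head a' c h' hp ih =>
    exact ReflTransGen.head (show belowRel r z ⟨a', ReflTransGen.head h' hp⟩ ⟨c, hp⟩ from h') ih

theorem below_clps {Z : Type u} {r : Z → Z → Prop} (wf : WellFounded r) (z : Z)
    (a : Below r z) : clps (belowRel r z) (below_wf wf z) a = clps r wf a.1 :=
  (clps_comp (below_wf wf z) wf Subtype.val (fun _ _ h => h)
    (fun x w hw => ⟨⟨w, below_closed x hw⟩, hw, rfl⟩) a).symm

/-! ### The pairing construction -/

variable (X Y : WEApg.{u})

/-- The graph for the pair `{X, Y}` before extensional collapse: the disjoint sum of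
`X` and `Y` with a new root `none` whose children are the two old roots. -/
inductive PairRel : Option (X.carrier ⊕ Y.carrier) → Option (X.carrier ⊕ Y.carrier) → Prop
  | inl {a b : X.carrier} : X.rel a b → PairRel (some (.inl a)) (some (.inl b))
  | inr {a b : Y.carrier} : Y.rel a b → PairRel (some (.inr a)) (some (.inr b))
  | rootl : PairRel (some (.inl X.root)) none
  | rootr : PairRel (some (.inr Y.root)) none

theorem pairRel_wf : WellFounded (PairRel X Y) := by
  have wfX := (isWFRel_iff_wellFounded X.rel).1 X.wf
  have wfY := (isWFRel_iff_wellFounded Y.rel).1 Y.wf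
  have hl : ∀ a, Acc (PairRel X Y) (some (Sum.inl a)) := by
    intro a
    induction a using wfX.induction with
    | _ a IH =>
      refine Acc.intro _ ?_
      rintro _ h
      cases h with
      | inl h => exact IH _ h
  have hr : ∀ a, Acc (PairRel X Y) (some (Sum.inr a)) := by
    intro a
    induction a using wfY.induction with
    | _ a IH =>
      refine Acc.intro _ ?_
      rintro _ h
      cases h with
      | inr h => exact IH _ h
  constructor
  rintro (_ | (a | b))
  · refine Acc.intro _ ?_
    rintro _ h
    cases h with
    | rootl => exact hl _
    | rootr => exact hr _
  · exact hl a
  · exact hr b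

theorem pairRel_acc (q : Option (X.carrier ⊕ Y.carrier)) :
    ReflTransGen (PairRel X Y) q none := by
  match q with
  | none => exact ReflTransGen.refl
  | some (Sum.inl a) =>
    exact ReflTransGen.tail
      (ReflTransGen.lift (fun t => some (Sum.inl t)) (fun _ _ h => PairRel.inl h) _ _ (X.acc a))
      PairRel.rootl
  | some (Sum.inr b) =>
    exact ReflTransGen.tail
      (ReflTransGen.lift (fun t => some (Sum.inr t)) (fun _ _ h => PairRel.inr h) _ _ (Y.acc b))
      PairRel.rootr

theorem pairRel_clps_inl (a : X.carrier) :
    clps (PairRel X Y) (pairRel_wf X Y) (some (Sum.inl a))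
      = clps X.rel ((isWFRel_iff_wellFounded X.rel).1 X.wf) a := by
  refine clps_comp ((isWFRel_iff_wellFounded X.rel).1 X.wf) (pairRel_wf X Y) (fun t => some (Sum.inl t)) (fun _ _ h => PairRel.inl h) ?_ a
  intro x w hw
  cases hw with
  | inl h => exact ⟨_, h, rfl⟩

theorem pairRel_clps_inr (b : Y.carrier) :
    clps (PairRel X Y) (pairRel_wf X Y) (some (Sum.inr b))
      = clps Y.rel ((isWFRel_iff_wellFounded Y.rel).1 Y.wf) b := by
  refine clps_comp ((isWFRel_iff_wellFounded Y.rel).1 Y.wf) (pairRel_wf X Y) (fun t => some (Sum.inr t)) (fun _ _ h => PairRel.inr h) ?_ b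
  intro x w hw
  cases hw with
  | inr h => exact ⟨_, h, rfl⟩

/-- Identify nodes of the pair graph with the same collapse. -/
def pairSetoid : Setoid (Option (X.carrier ⊕ Y.carrier)) :=
  ⟨fun a b => clps (PairRel X Y) (pairRel_wf X Y) a = clps (PairRel X Y) (pairRel_wf X Y) b,
    fun _ => rfl, Eq.symm, Eq.trans⟩

/-- The carrier of the pair apg. -/
def PairQ : Type u := Quotient (pairSetoid X Y)

/-- The collapse, descended to the quotient. -/
noncomputable def cQ : PairQ X Y → ZFSet.{u} :=
  Quotient.lift (clps (PairRel X Y) (pairRel_wf X Y)) (fun _ _ h => h)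

theorem cQ_mk (a : Option (X.carrier ⊕ Y.carrier)) :
    cQ X Y (Quotient.mk (pairSetoid X Y) a) = clps (PairRel X Y) (pairRel_wf X Y) a := rfl

theorem cQ_inj : Function.Injective (cQ X Y) := by
  intro p q
  refine Quotient.inductionOn₂ p q ?_
  intro a b h
  exact Quotient.sound h

/-- The relation of the pair apg. -/
def pairQRel : PairQ X Y → PairQ X Y → Prop :=
  fun p q => cQ X Y p ∈ cQ X Y q

theorem pairQRel_wf : WellFounded (pairQRel X Y) :=
  InvImage.wf (cQ X Y) ZFSet.mem_wf

theorem pairQRel_ext : IsExtRel (pairQRel X Y) := by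
  intro p q h
  apply cQ_inj
  apply ZFSet.ext
  intro s
  constructor
  · intro hs
    obtain ⟨a, rfl⟩ := Quotient.exists_rep p
    obtain ⟨a', ha', rfl⟩ := (mem_clps (pairRel_wf X Y) a s).1 hs
    exact (h (Quotient.mk _ a')).1 ((mem_clps (pairRel_wf X Y) a _).2 ⟨a', ha', rfl⟩)
  · intro hs
    obtain ⟨a, rfl⟩ := Quotient.exists_rep q
    obtain ⟨a', ha', rfl⟩ := (mem_clps (pairRel_wf X Y) a s).1 hs
    exact (h (Quotient.mk _ a')).2 ((mem_clps (pairRel_wf X Y) a _).2 ⟨a', ha', rfl⟩)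

theorem pairQRel_acc (q : PairQ X Y) :
    ReflTransGen (pairQRel X Y) q (Quotient.mk (pairSetoid X Y) none) := by
  obtain ⟨a, rfl⟩ := Quotient.exists_rep q
  refine ReflTransGen.lift (Quotient.mk (pairSetoid X Y)) ?_ _ _ (pairRel_acc X Y a)
  intro a b h
  show cQ X Y _ ∈ cQ X Y _
  rw [cQ_mk, cQ_mk]
  exact (mem_clps (pairRel_wf X Y) b _).2 ⟨a, h, rfl⟩

/-- The collapse of the quotient graph agrees with the descended collapse. -/
theorem pairQ_clps (q : PairQ X Y) :
    clps (pairQRel X Y) (pairQRel_wf X Y) q = cQ X Y q := by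
  induction q using (pairQRel_wf X Y).induction with
  | _ q IH =>
    apply ZFSet.ext
    intro s
    rw [mem_clps]
    constructor
    · rintro ⟨q', hq', rfl⟩
      rw [IH q' hq']
      exact hq'
    · intro hs
      obtain ⟨a, rfl⟩ := Quotient.exists_rep q
      obtain ⟨a', ha', rfl⟩ := (mem_clps (pairRel_wf X Y) a s).1 hs
      have hrel : pairQRel X Y (Quotient.mk _ a') (Quotient.mk _ a) := by
        show cQ X Y _ ∈ cQ X Y _
        rw [cQ_mk, cQ_mk]
        exact (mem_clps (pairRel_wf X Y) a _).2 ⟨a', ha', rfl⟩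
      exact ⟨Quotient.mk _ a', hrel, IH _ hrel⟩

/-- The pair apg. -/
noncomputable def pairApg : WEApg.{u} where
  carrier := PairQ X Y
  rel := pairQRel X Y
  root := Quotient.mk (pairSetoid X Y) none
  acc := pairQRel_acc X Y
  wf := (isWFRel_iff_wellFounded _).2 (pairQRel_wf X Y)
  ext := pairQRel_ext X Y

end PairingAux

/-- Pairing for well-founded extensional apgs. -/
theorem weapg_pairing (X Y : WEApg.{u}) :
    ∃ Z : WEApg.{u}, ∀ W : WEApg.{u},
      W.Mem Z ↔ (W.Iso X ∨ W.Iso Y) := by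
  classical
  refine ⟨pairApg X Y, fun W => ?_⟩
  have wfW := (isWFRel_iff_wellFounded W.rel).1 W.wf
  have wfX := (isWFRel_iff_wellFounded X.rel).1 X.wf
  have wfY := (isWFRel_iff_wellFounded Y.rel).1 Y.wf
  have wfQ := pairQRel_wf X Y
  have extQ := pairQRel_ext X Y
  constructor
  · rintro ⟨q, hq, hiso⟩
    have hc : clps W.rel wfW W.root
        = clps (belowRel (pairQRel X Y) q) (below_wf wfQ q) (belowRoot (pairQRel X Y) q) :=
      (piso_iff_clps wfW (below_wf wfQ q) W.ext (below_ext extQ q) W.acc (below_acc q)).1 hiso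
    rw [below_clps wfQ q, pairQ_clps] at hc
    replace hc : clps W.rel wfW W.root = cQ X Y q := hc
    have hq' : cQ X Y q ∈ clps (PairRel X Y) (pairRel_wf X Y) none := hq
    obtain ⟨a, ha, hae⟩ := (mem_clps (pairRel_wf X Y) none _).1 hq'
    cases ha with
    | rootl =>
      left
      rw [pairRel_clps_inl] at hae
      exact (piso_iff_clps wfW wfX W.ext X.ext W.acc X.acc).2 (by rw [hc, ← hae])
    | rootr =>
      right
      rw [pairRel_clps_inr] at hae
      exact (piso_iff_clps wfW wfY W.ext Y.ext W.acc Y.acc).2 (by rw [hc, ← hae])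
  · rintro (h | h)
    · have hc := (piso_iff_clps wfW wfX W.ext X.ext W.acc X.acc).1 h
      refine ⟨Quotient.mk (pairSetoid X Y) (some (Sum.inl X.root)), ?_, ?_⟩
      · exact (mem_clps (pairRel_wf X Y) none _).2 ⟨_, PairRel.rootl, rfl⟩
      · apply (piso_iff_clps wfW (below_wf wfQ _) W.ext (below_ext extQ _) W.acc (below_acc _)).2
        refine Eq.trans ?_ ((below_clps wfQ _ _).trans (pairQ_clps X Y _)).symm
        show clps W.rel wfW W.root = cQ X Y (Quotient.mk (pairSetoid X Y) (some (Sum.inl X.root)))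
        rw [cQ_mk, pairRel_clps_inl, hc]
    · have hc := (piso_iff_clps wfW wfY W.ext Y.ext W.acc Y.acc).1 h
      refine ⟨Quotient.mk (pairSetoid X Y) (some (Sum.inr Y.root)), ?_, ?_⟩
      · exact (mem_clps (pairRel_wf X Y) none _).2 ⟨_, PairRel.rootr, rfl⟩
      · apply (piso_iff_clps wfW (below_wf wfQ _) W.ext (below_ext extQ _) W.acc (below_acc _)).2
        refine Eq.trans ?_ ((below_clps wfQ _ _).trans (pairQ_clps X Y _)).symm
        show clps W.rel wfW W.root = cQ X Y (Quotient.mk (pairSetoid X Y) (some (Sum.inr Y.root)))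
        rw [cQ_mk, pairRel_clps_inr, hc]
end

section
/- Let C be a category with finite limits whose terminal object 1 is a strong generator, in the sense that every monomorphism m : A ⟶ X such that every global element 1 ⟶ X factors through m is an isomorphism. Then a morphism f : Y ⟶ X in C is a monomorphism if and only if every global element of X factors through f in at most one way, i.e., for all u, v : 1 ⟶ Y, u ≫ f = v ≫ f implies u = v. -/
open CategoryTheory CategoryTheory.Limits

universe v u

/-- In a finitely complete category whose terminal object is a strong generator
(every monomorphism through which all global elements factor is an isomorphism),
a morphism is a monomorphism iff every global element of its codomain factors
through it in at most one way. -/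
theorem mono_iff_injective_on_global_elements
    {C : Type u} [Category.{v} C] [HasFiniteLimits C]
    (hgen : ∀ (A X : C) (m : A ⟶ X), Mono m →
      (∀ x : (⊤_ C) ⟶ X, ∃ x' : (⊤_ C) ⟶ A, x' ≫ m = x) → IsIso m)
    {Y X : C} (f : Y ⟶ X) :
    Mono f ↔ ∀ u v : (⊤_ C) ⟶ Y, u ≫ f = v ≫ f → u = v := by
  constructor
  · intro hf u v h
    exact (cancel_mono f).mp h
  · intro h
    rw [← pullback.isIso_diagonal_iff f]
    apply hgen _ _ _ inferInstance
    intro x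
    refine ⟨x ≫ pullback.fst f f, ?_⟩
    apply pullback.hom_ext
    · simp [pullback.diagonal_fst]
    · have : x ≫ pullback.fst f f = x ≫ pullback.snd f f := by
        apply h
        simp [pullback.condition]
      simp [pullback.diagonal_snd, this]
end

section
/- Let C be a category with finite limits whose terminal object 1 is a strong generator, in the sense that every monomorphism m : A ⟶ X such that every global element 1 ⟶ X factors through m is an isomorphism. Then for any object X and any two subobjects A, B of X: A ≤ B in the subobject order if and only if every global element 1 ⟶ X that factors through A also factors through B. -/
open CategoryTheory CategoryTheory.Limits

universe v u

/-- In a finitely complete category whose terminal object is a strong generator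
(every monomorphism through which all global elements factor is an isomorphism),
subobject containment is detected by global elements: `A ≤ B` iff every global
element factoring through `A` also factors through `B`. -/
theorem subobject_le_iff_global_elements
    {C : Type u} [Category.{v} C] [HasFiniteLimits C]
    (hgen : ∀ (A X : C) (m : A ⟶ X), Mono m →
      (∀ x : (⊤_ C) ⟶ X, ∃ x' : (⊤_ C) ⟶ A, x' ≫ m = x) → IsIso m)
    {X : C} (A B : Subobject X) :
    A ≤ B ↔ ∀ x : (⊤_ C) ⟶ X, A.Factors x → B.Factors x := by
  constructor
  · intro h x hx
    exact Subobject.factors_of_le x h hx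
  · intro h
    have hAB : A ≤ A ⊓ B := by
      set m : ((A ⊓ B : Subobject X) : C) ⟶ (A : C) :=
        Subobject.ofLE _ _ (inf_le_left : A ⊓ B ≤ A) with hm
      have hmono : Mono m := inferInstance
      have hfac : ∀ x : (⊤_ C) ⟶ (A : C), ∃ x' : (⊤_ C) ⟶ ((A ⊓ B : Subobject X) : C),
          x' ≫ m = x := by
        intro x
        have h1 : A.Factors (x ≫ A.arrow) := Subobject.factors_comp_arrow x
        have h2 : B.Factors (x ≫ A.arrow) := h _ h1
        have h3 : (A ⊓ B).Factors (x ≫ A.arrow) :=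
          (Subobject.inf_factors _).mpr ⟨h1, h2⟩
        refine ⟨(A ⊓ B).factorThru _ h3, ?_⟩
        have : ((A ⊓ B).factorThru _ h3 ≫ m) ≫ A.arrow = x ≫ A.arrow := by
          rw [Category.assoc, hm, Subobject.ofLE_arrow, Subobject.factorThru_arrow]
        exact (cancel_mono A.arrow).mp this
      have : IsIso m := hgen _ _ m hmono hfac
      exact Subobject.le_of_comm (inv m) (by simp [hm])
    exact hAB.trans inf_le_right
end

section
/- Let C be a category with finite limits and a strict initial object 0 (every morphism into 0 is an isomorphism), whose terminal object 1 is a strong generator, in the sense that every monomorphism m : A ⟶ X such that every global element 1 ⟶ X factors through m is an isomorphism, and in which 1 is nonempty, i.e., there is no morphism 1 ⟶ 0. Then an object X of C is initial if and only if there exists no morphism 1 ⟶ X. -/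
open CategoryTheory CategoryTheory.Limits

universe v u

/-- In a finitely complete category with a strict initial object, whose terminal object
is a nonempty strong generator, an object is initial iff it has no global elements. -/
theorem initial_iff_no_global_elements
    {C : Type u} [Category.{v} C] [HasFiniteLimits C] [HasInitial C]
    [HasStrictInitialObjects C]
    (hgen : ∀ (A X : C) (m : A ⟶ X), Mono m →
      (∀ x : (⊤_ C) ⟶ X, ∃ x' : (⊤_ C) ⟶ A, x' ≫ m = x) → IsIso m)
    (hne : IsEmpty ((⊤_ C) ⟶ (⊥_ C)))
    (X : C) :
    Nonempty (IsInitial X) ↔ IsEmpty ((⊤_ C) ⟶ X) := by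
  constructor
  · rintro ⟨hX⟩
    exact ⟨fun x => hne.false (x ≫ (hX.uniqueUpToIso initialIsInitial).hom)⟩
  · intro h
    have hmono : Mono (initial.to X) := inferInstance
    have : IsIso (initial.to X) := hgen _ _ _ hmono (fun x => (h.false x).elim)
    exact ⟨IsInitial.ofIso initialIsInitial (asIso (initial.to X))⟩
end
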